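/- Let f : ℝ^n → ℝ be differentiable with L-Lipschitz gradient, K ∈ ℝ^{n×n} with σ_min(KᵀK) = σ > 0, and suppose at iterates α, α' ∈ ℝ^n, λ, λ' ∈ ℝ^n one has -∇f(α) = Kᵀλ and -∇f(α') = Kᵀλ'. Then ‖λ - λ'‖² ≤ (L²/σ)‖α - α'‖². -/

import Mathlib

open Matrix RealInnerProductSpace

theorem rayleigh_expand (n : ℕ) (M : Matrix (Fin n) (Fin n) ℝ) (hM : M.IsHermitian)
    (x : EuclideanSpace ℝ (Fin n)) :
    ⟪x, Matrix.toEuclideanLin M x⟫ =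
      ∑ i, hM.eigenvalues i * ((hM.eigenvectorBasis.repr x i) ^ 2) := by
  set b := hM.eigenvectorBasis
  have h1 : ∀ i, b.repr (Matrix.toEuclideanLin M x) i = hM.eigenvalues i * b.repr x i := by
    intro i
    rw [b.repr_apply_apply, b.repr_apply_apply]
    have hsym := (Matrix.isHermitian_iff_isSymmetric.mp hM)
    rw [← hsym (b i) x]
    have : Matrix.toEuclideanLin M (b i) = hM.eigenvalues i • b i := by
      apply (WithLp.equiv 2 _).injective
      simp only [WithLp.equiv_apply, Matrix.ofLp_toEuclideanLin_apply, WithLp.ofLp_smul]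
      exact hM.mulVec_eigenvectorBasis i
    rw [this, real_inner_smul_left]
  rw [← b.repr.inner_map_map x (Matrix.toEuclideanLin M x)]
  simp only [PiLp.inner_apply, RCLike.inner_apply, starRingEnd_apply, star_trivial]
  refine Finset.sum_congr rfl fun i _ => ?_
  rw [h1]; ring

/-- Dual iterates satisfying the stationarity relation `-∇f = Kᵀλ` satisfy
`‖λ - λ'‖² ≤ (L²/σ)‖α - α'‖²`. -/
theorem dual_variable_bound (n : ℕ) (hn : 0 < n) (f : EuclideanSpace ℝ (Fin n) → ℝ) (L : ℝ)
    (hL0 : 0 ≤ L) (hf : Differentiable ℝ f)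
    (hLip : LipschitzWith (Real.toNNReal L) (fun x => gradient f x))
    (K : Matrix (Fin n) (Fin n) ℝ) (hH : (Kᵀ * K).IsHermitian) (σ : ℝ)
    (hσ : σ = ⨅ i, hH.eigenvalues i) (hσpos : 0 < σ)
    (α α' lam lam' : EuclideanSpace ℝ (Fin n))
    (hstat : -gradient f α = Matrix.toEuclideanLin Kᵀ lam)
    (hstat' : -gradient f α' = Matrix.toEuclideanLin Kᵀ lam') :
    ‖lam - lam'‖ ^ 2 ≤ (L ^ 2 / σ) * ‖α - α'‖ ^ 2 := by
  set T := Matrix.toEuclideanLin K with hT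
  set S := Matrix.toEuclideanLin Kᵀ with hS
  -- σ is a lower bound on eigenvalues
  have hσle : ∀ i, σ ≤ hH.eigenvalues i := by
    intro i
    rw [hσ]
    exact ciInf_le (Set.Finite.bddBelow (Set.finite_range _)) i
  -- adjoint identity
  have hadj : ∀ x y : EuclideanSpace ℝ (Fin n), ⟪x, S y⟫ = ⟪T x, y⟫ := by
    intro x y
    have key : ∀ (u v : Fin n → ℝ), u ⬝ᵥ (Kᵀ *ᵥ v) = (K *ᵥ u) ⬝ᵥ v := by
      intro u v
      rw [Matrix.dotProduct_mulVec, Matrix.vecMul_transpose]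
    simp only [EuclideanSpace.inner_eq_star_dotProduct, star_trivial, hS, hT,
      Matrix.ofLp_toEuclideanLin_apply]
    rw [dotProduct_comm, key, dotProduct_comm]
  -- Rayleigh lower bound for K
  have hray : ∀ x : EuclideanSpace ℝ (Fin n), σ * ‖x‖ ^ 2 ≤ ‖T x‖ ^ 2 := by
    intro x
    have h1 : ⟪x, Matrix.toEuclideanLin (Kᵀ * K) x⟫ = ‖T x‖ ^ 2 := by
      have hmul : Matrix.toEuclideanLin (Kᵀ * K) x = S (T x) := by
        apply (WithLp.equiv 2 _).injective
        simp only [hS, hT, WithLp.equiv_apply, Matrix.ofLp_toEuclideanLin_apply]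
        rw [Matrix.mulVec_mulVec]
      rw [hmul, hadj, real_inner_self_eq_norm_sq]
    rw [← h1, rayleigh_expand n _ hH x]
    have hnorm : ‖x‖ ^ 2 = ∑ i, (hH.eigenvectorBasis.repr x i) ^ 2 := by
      rw [← hH.eigenvectorBasis.repr.norm_map x]
      rw [EuclideanSpace.norm_eq]
      rw [Real.sq_sqrt (by positivity)]
      refine Finset.sum_congr rfl fun i _ => ?_
      rw [Real.norm_eq_abs, sq_abs]
    rw [hnorm, Finset.mul_sum]
    refine Finset.sum_le_sum fun i _ => ?_
    exact mul_le_mul_of_nonneg_right (hσle i) (sq_nonneg _)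
  -- T is surjective
  have hsurj : Function.Surjective T := by
    rw [← LinearMap.injective_iff_surjective]
    intro x x' hxx'
    have : T (x - x') = 0 := by rw [map_sub, hxx', sub_self]
    have h2 := hray (x - x')
    rw [this, norm_zero] at h2
    have : ‖x - x'‖ ^ 2 ≤ 0 := by nlinarith
    have : ‖x - x'‖ = 0 := by nlinarith [sq_nonneg ‖x - x'‖, norm_nonneg (x - x')]
    rwa [norm_sub_eq_zero_iff] at this
  -- lower bound for S = Kᵀ
  have hSlower : ∀ y : EuclideanSpace ℝ (Fin n), σ * ‖y‖ ^ 2 ≤ ‖S y‖ ^ 2 := by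
    intro y
    obtain ⟨x, hx⟩ := hsurj y
    rcases eq_or_ne y 0 with rfl | hy0
    · simp
    have h1 : ‖y‖ ^ 2 ≤ ‖S y‖ * ‖x‖ := by
      have : ‖y‖ ^ 2 = ⟪S y, x⟫ := by
        rw [real_inner_comm, hadj x y, hx, real_inner_self_eq_norm_sq]
      rw [this]
      exact real_inner_le_norm _ _
    have h2 : σ * ‖x‖ ^ 2 ≤ ‖y‖ ^ 2 := by rw [← hx]; exact hray x
    have hy : (0:ℝ) < ‖y‖ := norm_pos_iff.mpr hy0
    have hAA : ‖y‖ ^ 2 * ‖y‖ ^ 2 ≤ (‖S y‖ * ‖x‖) * (‖S y‖ * ‖x‖) :=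
      mul_self_le_mul_self (sq_nonneg _) h1
    have h3 : σ * ((‖S y‖ * ‖x‖) * (‖S y‖ * ‖x‖)) = ‖S y‖ ^ 2 * (σ * ‖x‖ ^ 2) := by ring
    have h4 : ‖S y‖ ^ 2 * (σ * ‖x‖ ^ 2) ≤ ‖S y‖ ^ 2 * ‖y‖ ^ 2 :=
      mul_le_mul_of_nonneg_left h2 (sq_nonneg _)
    have h5 : σ * (‖y‖ ^ 2 * ‖y‖ ^ 2) ≤ σ * ((‖S y‖ * ‖x‖) * (‖S y‖ * ‖x‖)) :=
      mul_le_mul_of_nonneg_left hAA hσpos.le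
    have h6 : σ * ‖y‖ ^ 2 * ‖y‖ ^ 2 ≤ ‖S y‖ ^ 2 * ‖y‖ ^ 2 := by nlinarith
    exact le_of_mul_le_mul_right h6 (pow_pos hy 2)
  -- apply to y = lam - lam'
  have hSdiff : S (lam - lam') = gradient f α' - gradient f α := by
    rw [map_sub, ← hstat, ← hstat']
    abel
  have hlip' : ‖gradient f α' - gradient f α‖ ≤ L * ‖α - α'‖ := by
    have := hLip.dist_le_mul α' α
    rw [dist_eq_norm, dist_eq_norm] at this
    rw [norm_sub_rev α]
    calc ‖gradient f α' - gradient f α‖ ≤ (Real.toNNReal L) * ‖α' - α‖ := this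
      _ = L * ‖α' - α‖ := by rw [Real.coe_toNNReal L hL0]
  have hfinal : σ * ‖lam - lam'‖ ^ 2 ≤ L ^ 2 * ‖α - α'‖ ^ 2 := by
    calc σ * ‖lam - lam'‖ ^ 2 ≤ ‖S (lam - lam')‖ ^ 2 := hSlower _
      _ = ‖gradient f α' - gradient f α‖ ^ 2 := by rw [hSdiff]
      _ ≤ (L * ‖α - α'‖) ^ 2 := by
          apply pow_le_pow_left₀ (norm_nonneg _) hlip'
      _ = L ^ 2 * ‖α - α'‖ ^ 2 := by ring
  rw [div_mul_eq_mul_div, le_div_iff₀ hσpos]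
  nlinarith
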